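/- There exists a constant C > 0 such that for all N ≥ 2, setting K = ⌈2N² · log N⌉ (natural logarithm), the random-transpositions shuffle satisfies, for every starting deck d (a permutation of Fin N): TV(μ_K(d), U) ≤ C/N, where U is the uniform distribution on the permutations of Fin N. -/

import Mathlib

open scoped ENNReal

/-- Total variation distance between two distributions: `(1/2) Σ_x |μ(x) − ν(x)|`. -/
noncomputable def tvDist {X : Type*} (μ ν : PMF X) : ℝ≥0∞ :=
  (1 / 2) * ∑' x, max (μ x - ν x) (ν x - μ x)

/-- One step of the random-transpositions shuffle: sample positions `p` and `p'` independently
and uniformly, and swap the cards at positions `p` and `p'` (if `p = p'` nothing changes). -/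
noncomputable def rtransStep {N : ℕ} (h : 0 < N) (d : Equiv.Perm (Fin N)) :
    PMF (Equiv.Perm (Fin N)) :=
  haveI : Nonempty (Fin N) := ⟨⟨0, h⟩⟩
  (PMF.uniformOfFintype (Fin N)).bind fun p =>
    (PMF.uniformOfFintype (Fin N)).bind fun p' =>
      PMF.pure (d * Equiv.swap p p')

/-- Distribution of the deck after `K` steps of the random-transpositions shuffle from `d`. -/
noncomputable def rtransWalk {N : ℕ} (h : 0 < N) (d : Equiv.Perm (Fin N)) :
    ℕ → PMF (Equiv.Perm (Fin N))
  | 0 => PMF.pure d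
  | (K + 1) => (rtransWalk h d K).bind (rtransStep h)

/-- The uniform distribution on permutations of `Fin N`. -/
noncomputable def uniformPerm (N : ℕ) : PMF (Equiv.Perm (Fin N)) :=
  haveI : Nonempty (Equiv.Perm (Fin N)) := ⟨1⟩
  PMF.uniformOfFintype (Equiv.Perm (Fin N))

/-! ### Expectation of a nonnegative function against a PMF -/

noncomputable def pexp {α : Type*} (μ : PMF α) (f : α → ℝ≥0∞) : ℝ≥0∞ := ∑' a, μ a * f a

lemma pexp_pure {α : Type*} (a : α) (f : α → ℝ≥0∞) : pexp (PMF.pure a) f = f a := by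
  simp only [pexp, PMF.pure_apply]
  rw [tsum_eq_single a (by intro b hb; simp [hb, Ne.symm hb])]
  simp

lemma pexp_bind {α β : Type*} (μ : PMF α) (g : α → PMF β) (f : β → ℝ≥0∞) :
    pexp (μ.bind g) f = pexp μ (fun a => pexp (g a) f) := by
  simp only [pexp, PMF.bind_apply]
  calc ∑' (b : β), (∑' (a : α), μ a * (g a) b) * f b
      = ∑' (b : β) (a : α), μ a * (g a) b * f b := by
        congr 1; ext b; exact ENNReal.tsum_mul_right.symm
    _ = ∑' (a : α) (b : β), μ a * (g a) b * f b := ENNReal.tsum_comm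
    _ = ∑' (a : α), μ a * ∑' (b : β), (g a) b * f b := by
        congr 1; ext a
        simp_rw [mul_assoc]
        exact ENNReal.tsum_mul_left

lemma pexp_mono {α : Type*} (μ : PMF α) {f g : α → ℝ≥0∞} (h : ∀ a, f a ≤ g a) :
    pexp μ f ≤ pexp μ g :=
  ENNReal.tsum_le_tsum fun a => mul_le_mul_right (h a) _

lemma pexp_const {α : Type*} (μ : PMF α) (c : ℝ≥0∞) : pexp μ (fun _ => c) = c := by
  simp [pexp, ENNReal.tsum_mul_right, μ.tsum_coe]

lemma pexp_mul {α : Type*} (μ : PMF α) (c : ℝ≥0∞) (f : α → ℝ≥0∞) :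
    pexp μ (fun a => c * f a) = c * pexp μ f := by
  simp only [pexp]
  rw [← ENNReal.tsum_mul_left]
  congr 1; ext a; ring

lemma pexp_uniform {α : Type*} [Fintype α] [Nonempty α] (F : α → ℝ≥0∞) :
    pexp (PMF.uniformOfFintype α) F = (Fintype.card α : ℝ≥0∞)⁻¹ * ∑ a, F a := by
  simp [pexp, PMF.uniformOfFintype_apply, tsum_fintype, Finset.mul_sum]

lemma sum_ite_mem_univ {α : Type*} [Fintype α] [DecidableEq α] (M : Finset α) (a b : ℝ≥0∞) :
    ∑ x : α, (if x ∈ M then a else b)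
      = (M.card : ℝ≥0∞) * a + ((Fintype.card α - M.card : ℕ) : ℝ≥0∞) * b := by
  rw [Finset.sum_ite, Finset.sum_const, Finset.sum_const]
  congr 1
  · rw [nsmul_eq_mul]
    congr 2
    simp
  · rw [nsmul_eq_mul]
    congr 2
    have : Finset.filter (fun x => x ∉ M) Finset.univ = Mᶜ := by
      ext x; simp
    rw [this, Finset.card_compl]

/-! ### Uniform distribution is invariant -/

lemma unif_map {α : Type*} [Fintype α] [Nonempty α] (σ : α ≃ α) :
    (PMF.uniformOfFintype α).map σ = PMF.uniformOfFintype α := by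
  ext x
  rw [PMF.map_apply]
  rw [tsum_eq_single (σ.symm x) (by intro a ha; simp [Equiv.eq_symm_apply] at *; tauto)]
  simp

lemma unif_bind_comp {α : Type*} [Fintype α] [Nonempty α] {γ : Type*} (σ : α ≃ α) (g : α → PMF γ) :
    ((PMF.uniformOfFintype α).bind fun a => g (σ a)) = (PMF.uniformOfFintype α).bind g := by
  have := PMF.bind_map (PMF.uniformOfFintype α) (σ : α → α) g
  rw [unif_map] at this
  exact this.symm

/-! ### The coupled pair chain -/

section pair
variable {N : ℕ}

/-- coupled step -/
noncomputable def pairStep (h : 0 < N) (x : Equiv.Perm (Fin N) × Equiv.Perm (Fin N)) :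
    PMF (Equiv.Perm (Fin N) × Equiv.Perm (Fin N)) :=
  haveI : Nonempty (Fin N) := ⟨⟨0, h⟩⟩
  (PMF.uniformOfFintype (Fin N)).bind fun p =>
    (PMF.uniformOfFintype (Fin N)).bind fun p' =>
      PMF.pure (x.1 * Equiv.swap p p', x.2 * Equiv.swap p (x.2⁻¹ (x.1 p')))

noncomputable def pairWalk (h : 0 < N) (x : Equiv.Perm (Fin N) × Equiv.Perm (Fin N)) :
    ℕ → PMF (Equiv.Perm (Fin N) × Equiv.Perm (Fin N))
  | 0 => PMF.pure x
  | (K + 1) => (pairWalk h x K).bind (pairStep h)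

lemma pairStep_fst (h : 0 < N) (x) :
    (pairStep h x).map Prod.fst = rtransStep h x.1 := by
  haveI : Nonempty (Fin N) := ⟨⟨0, h⟩⟩
  simp only [pairStep, rtransStep, PMF.map_bind, PMF.pure_map]

lemma pairStep_snd (h : 0 < N) (x) :
    (pairStep h x).map Prod.snd = rtransStep h x.2 := by
  haveI : Nonempty (Fin N) := ⟨⟨0, h⟩⟩
  simp only [pairStep, rtransStep, PMF.map_bind, PMF.pure_map]
  congr 1; funext p
  exact unif_bind_comp (x.1.trans x.2.symm) fun q => PMF.pure (x.2 * Equiv.swap p q)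

lemma pairWalk_fst (h : 0 < N) (x) (K : ℕ) :
    (pairWalk h x K).map Prod.fst = rtransWalk h x.1 K := by
  induction K with
  | zero => simp [pairWalk, rtransWalk, PMF.pure_map]
  | succ K ih =>
    rw [pairWalk, rtransWalk, PMF.map_bind, ← ih, PMF.bind_map]
    congr 1; funext y; exact pairStep_fst h y

lemma pairWalk_snd (h : 0 < N) (x) (K : ℕ) :
    (pairWalk h x K).map Prod.snd = rtransWalk h x.2 K := by
  induction K with
  | zero => simp [pairWalk, rtransWalk, PMF.pure_map]
  | succ K ih =>
    rw [pairWalk, rtransWalk, PMF.map_bind, ← ih, PMF.bind_map]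
    congr 1; funext y; exact pairStep_snd h y

lemma unif_step_stat (h : 0 < N) :
    (uniformPerm N).bind (rtransStep h) = uniformPerm N := by
  haveI : Nonempty (Fin N) := ⟨⟨0, h⟩⟩
  haveI : Nonempty (Equiv.Perm (Fin N)) := ⟨1⟩
  have hrw : (uniformPerm N).bind (rtransStep h) =
      (PMF.uniformOfFintype (Equiv.Perm (Fin N))).bind fun d =>
        (PMF.uniformOfFintype (Fin N)).bind fun p =>
          (PMF.uniformOfFintype (Fin N)).bind fun p' =>
            PMF.pure (d * Equiv.swap p p') := rfl
  rw [hrw, PMF.bind_comm]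
  show _ = uniformPerm N
  rw [show uniformPerm N = PMF.uniformOfFintype (Equiv.Perm (Fin N)) from rfl]
  have base : ∀ p p' : Fin N,
      ((PMF.uniformOfFintype (Equiv.Perm (Fin N))).bind fun d => PMF.pure (d * Equiv.swap p p'))
        = PMF.uniformOfFintype (Equiv.Perm (Fin N)) := by
    intro p p'
    have := unif_map (Equiv.mulRight (Equiv.swap p p'))
    rw [PMF.map] at this
    convert this using 2
    rfl
  have inner : ∀ p : Fin N,
      ((PMF.uniformOfFintype (Equiv.Perm (Fin N))).bind fun d =>
        (PMF.uniformOfFintype (Fin N)).bind fun p' => PMF.pure (d * Equiv.swap p p'))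
        = PMF.uniformOfFintype (Equiv.Perm (Fin N)) := by
    intro p
    rw [PMF.bind_comm]
    simp only [base, PMF.bind_const]
  simp only [inner, PMF.bind_const]

lemma unif_walk_stat (h : 0 < N) (K : ℕ) :
    ((uniformPerm N).bind fun e => rtransWalk h e K) = uniformPerm N := by
  induction K with
  | zero => simp only [rtransWalk, PMF.bind_pure]
  | succ K ih =>
    rw [show (fun e => rtransWalk h e (K+1))
        = fun e => (rtransWalk h e K).bind (rtransStep h) from rfl,
      ← PMF.bind_bind, ih, unif_step_stat]

end pair

/-! ### Mismatch counting -/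

section mismatch
variable {N : ℕ}

/-- set of mismatched positions -/
def MM (d e : Equiv.Perm (Fin N)) : Finset (Fin N) := Finset.univ.filter fun i => d i ≠ e i

lemma mem_MM {d e : Equiv.Perm (Fin N)} {i : Fin N} : i ∈ MM d e ↔ d i ≠ e i := by
  simp [MM]

lemma two_le_card_MM {d e : Equiv.Perm (Fin N)} (hde : d ≠ e) : 2 ≤ (MM d e).card := by
  have hsupp : MM d e = (e⁻¹ * d).support := by
    ext i
    simp only [mem_MM, Equiv.Perm.mem_support, Equiv.Perm.mul_apply]
    constructor
    · intro h hc; exact h (by simpa using congrArg e hc)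
    · intro h hc; exact h (by rw [hc]; simp)
  rw [hsupp]
  exact Equiv.Perm.one_lt_card_support_of_ne_one
    (fun hc => hde (inv_mul_eq_one.mp hc).symm)

variable (d e : Equiv.Perm (Fin N)) (p p' : Fin N)

lemma p_not_mem_MM' : p ∉ MM (d * Equiv.swap p p') (e * Equiv.swap p (e⁻¹ (d p'))) := by
  simp only [mem_MM, Equiv.Perm.mul_apply, Equiv.swap_apply_left, ne_eq, not_not]
  simp

lemma MM'_subset_L1 (hp : d p = e p) :
    MM (d * Equiv.swap p p') (e * Equiv.swap p (e⁻¹ (d p'))) ⊆ MM d e := by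
  intro i hi
  rw [mem_MM] at hi ⊢
  intro hii
  apply hi
  rw [Equiv.Perm.mul_apply, Equiv.Perm.mul_apply]
  by_cases h1 : i = p
  · rw [h1, Equiv.swap_apply_left, Equiv.swap_apply_left]
    exact (Equiv.apply_symm_apply e (d p')).symm
  · by_cases h2 : i = p'
    · by_cases h3 : p' = e⁻¹ (d p')
      · rw [h2, Equiv.swap_apply_right, ← h3, Equiv.swap_apply_right]
        exact hp
      · exact absurd (e.injective (show e p' = e (e⁻¹ (d p')) by
          rw [Equiv.Perm.inv_def, Equiv.apply_symm_apply, ← h2]; exact hii.symm)) h3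
    · by_cases h3 : i = e⁻¹ (d p')
      · exact absurd (d.injective (show d i = d p' by
          rw [hii, h3, Equiv.Perm.inv_def, Equiv.apply_symm_apply])) h2
      · rw [Equiv.swap_apply_of_ne_of_ne h1 h2, Equiv.swap_apply_of_ne_of_ne h1 h3]
        exact hii

lemma MM'_subset_L2 :
    MM (d * Equiv.swap p p') (e * Equiv.swap p (e⁻¹ (d p'))) ⊆ insert p' ((MM d e).erase p) := by
  intro i hi
  rw [Finset.mem_insert, Finset.mem_erase]
  by_cases hip' : i = p'
  · exact Or.inl hip'
  · have hip : i ≠ p := fun hc => p_not_mem_MM' d e p p' (by rwa [hc] at hi)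
    refine Or.inr ⟨hip, ?_⟩
    rw [mem_MM] at hi ⊢
    by_cases hib : i = e⁻¹ (d p')
    · intro hc
      exact hip' (d.injective (show d i = d p' by rw [hc, hib, Equiv.Perm.inv_def, Equiv.apply_symm_apply]))
    · rwa [Equiv.Perm.mul_apply, Equiv.Perm.mul_apply,
        Equiv.swap_apply_of_ne_of_ne hip hip', Equiv.swap_apply_of_ne_of_ne hip hib] at hi

lemma MM'_subset_L3 (hp' : p' ∈ MM d e) :
    MM (d * Equiv.swap p p') (e * Equiv.swap p (e⁻¹ (d p'))) ⊆ (MM d e).erase p := by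
  intro i hi
  have h2 := MM'_subset_L2 d e p p' hi
  rw [Finset.mem_insert] at h2
  rcases h2 with h2 | h2
  · rw [Finset.mem_erase]
    have hip : i ≠ p := fun hc => p_not_mem_MM' d e p p' (by rwa [hc] at hi)
    exact ⟨hip, h2 ▸ hp'⟩
  · exact h2

lemma card_MM'_le :
    (MM (d * Equiv.swap p p') (e * Equiv.swap p (e⁻¹ (d p')))).card ≤ (MM d e).card := by
  by_cases hp : p ∈ MM d e
  · calc (MM (d * Equiv.swap p p') (e * Equiv.swap p (e⁻¹ (d p')))).card
        ≤ (insert p' ((MM d e).erase p)).card := Finset.card_le_card (MM'_subset_L2 d e p p')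
      _ ≤ ((MM d e).erase p).card + 1 := Finset.card_insert_le _ _
      _ = ((MM d e).card - 1) + 1 := by rw [Finset.card_erase_of_mem hp]
      _ ≤ (MM d e).card := by
          have : 1 ≤ (MM d e).card := Finset.card_pos.2 ⟨p, hp⟩
          omega
  · exact Finset.card_le_card (MM'_subset_L1 d e p p' (by simpa [mem_MM, not_not] using hp))

lemma card_MM'_lt (hp : p ∈ MM d e) (hp' : p' ∈ MM d e) :
    (MM (d * Equiv.swap p p') (e * Equiv.swap p (e⁻¹ (d p')))).card ≤ (MM d e).card - 1 := by
  calc (MM (d * Equiv.swap p p') (e * Equiv.swap p (e⁻¹ (d p')))).card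
      ≤ ((MM d e).erase p).card := Finset.card_le_card (MM'_subset_L3 d e p p' hp')
    _ = (MM d e).card - 1 := Finset.card_erase_of_mem hp

end mismatch

/-! ### Potential function and arithmetic -/

lemma nat_div_le_nat_div {a b c d : ℕ} (hb : b ≠ 0) (hd : d ≠ 0) (h : a * d ≤ c * b) :
    (a : ℝ≥0∞) / b ≤ (c : ℝ≥0∞) / d := by
  rw [ENNReal.div_le_iff (by exact_mod_cast hb) (by simp)]
  rw [show ((c : ℝ≥0∞)/d) * b = ((c : ℝ≥0∞) * b) / d by
    rw [div_eq_mul_inv, mul_right_comm, ← div_eq_mul_inv]]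
  rw [ENNReal.le_div_iff_mul_le (by exact_mod_cast Or.inl hd) (by simp)]
  exact_mod_cast h

/-- potential function -/
noncomputable def Wgt (m : ℕ) : ℝ≥0∞ := ((2 * m : ℕ) : ℝ≥0∞) / ((m + 1 : ℕ) : ℝ≥0∞)

lemma Wgt_zero : Wgt 0 = 0 := by simp [Wgt]

lemma Wgt_mono {m n : ℕ} (h : m ≤ n) : Wgt m ≤ Wgt n := by
  apply nat_div_le_nat_div (by omega) (by omega)
  nlinarith

lemma Wgt_le_two (m : ℕ) : Wgt m ≤ 2 := by
  have h : (2 : ℝ≥0∞) = ((2 : ℕ) : ℝ≥0∞) / ((1 : ℕ) : ℝ≥0∞) := by simp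
  rw [h]
  exact nat_div_le_nat_div (by omega) (by omega) (by omega)

lemma one_le_Wgt {m : ℕ} (h : 1 ≤ m) : 1 ≤ Wgt m := by
  have h1 : (1 : ℝ≥0∞) = ((1 : ℕ) : ℝ≥0∞) / ((1 : ℕ) : ℝ≥0∞) := by simp
  rw [h1]
  exact nat_div_le_nat_div (by omega) (by omega) (by omega)

lemma cast_mul_Wgt (a m : ℕ) :
    (a : ℝ≥0∞) * Wgt m = ((a * (2 * m) : ℕ) : ℝ≥0∞) / ((m + 1 : ℕ) : ℝ≥0∞) := by
  rw [Wgt, ← mul_div_assoc, ← Nat.cast_mul]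

lemma Wgt_key {m N : ℕ} (h2 : 2 ≤ m) (hN : m ≤ N) :
    ((m : ℝ≥0∞)) ^ 2 * Wgt (m - 1) + ((N ^ 2 - m ^ 2 : ℕ) : ℝ≥0∞) * Wgt m
      ≤ ((N ^ 2 - 1 : ℕ) : ℝ≥0∞) * Wgt m := by
  obtain ⟨k, rfl⟩ : ∃ k, m = k + 1 := ⟨m - 1, by omega⟩
  have hc : ((k + 1 : ℕ) : ℝ≥0∞) ^ 2 = (((k + 1) ^ 2 : ℕ) : ℝ≥0∞) := by push_cast; ring
  have key : ((k + 1 : ℕ) : ℝ≥0∞) ^ 2 * Wgt (k + 1 - 1)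
      ≤ (((k + 1) ^ 2 - 1 : ℕ) : ℝ≥0∞) * Wgt (k + 1) := by
    have h1 : ((k+1)^2 - 1 : ℕ) = k * (k + 2) := by
      have : (k+1)^2 = k * (k+2) + 1 := by ring
      omega
    rw [h1, hc, Nat.add_sub_cancel, cast_mul_Wgt, cast_mul_Wgt]
    exact nat_div_le_nat_div (by omega) (by omega) (Nat.le_of_eq (by ring))
  calc ((k + 1 : ℕ) : ℝ≥0∞) ^ 2 * Wgt (k + 1 - 1) + ((N ^ 2 - (k+1) ^ 2 : ℕ) : ℝ≥0∞) * Wgt (k+1)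
      ≤ (((k + 1) ^ 2 - 1 : ℕ) : ℝ≥0∞) * Wgt (k + 1)
          + ((N ^ 2 - (k+1) ^ 2 : ℕ) : ℝ≥0∞) * Wgt (k+1) := add_le_add_left key _
    _ = ((((k + 1) ^ 2 - 1) + (N ^ 2 - (k+1) ^ 2) : ℕ) : ℝ≥0∞) * Wgt (k+1) := by
        rw [Nat.cast_add, add_mul]
    _ = ((N ^ 2 - 1 : ℕ) : ℝ≥0∞) * Wgt (k+1) := by
        congr 2
        have hsq : (k+1)^2 ≤ N^2 := Nat.pow_le_pow_left hN 2
        have h1 : 1 ≤ (k+1)^2 := Nat.one_le_pow _ _ (by omega)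
        omega

lemma double_count {m N : ℕ} (hmN : m ≤ N) (a b : ℝ≥0∞) :
    (m : ℝ≥0∞) * ((m : ℝ≥0∞) * a + ((N - m : ℕ) : ℝ≥0∞) * b)
      + ((N - m : ℕ) : ℝ≥0∞) * ((N : ℝ≥0∞) * b)
      = (m : ℝ≥0∞) ^ 2 * a + ((N ^ 2 - m ^ 2 : ℕ) : ℝ≥0∞) * b := by
  obtain ⟨t, rfl⟩ : ∃ t, N = m + t := ⟨N - m, by omega⟩
  have h1 : (m + t) - m = t := by omega
  have h2 : (m + t) ^ 2 - m ^ 2 = m * t + t * (m + t) := by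
    have : (m + t) ^ 2 = m ^ 2 + (m * t + t * (m + t)) := by ring
    omega
  rw [h1, h2]
  push_cast
  ring

/-! ### The drift bound -/

section drift
variable {N : ℕ}

noncomputable def rhoE (N : ℕ) : ℝ≥0∞ := ((N ^ 2 - 1 : ℕ) : ℝ≥0∞) / ((N ^ 2 : ℕ) : ℝ≥0∞)

noncomputable def Vfun (y : Equiv.Perm (Fin N) × Equiv.Perm (Fin N)) : ℝ≥0∞ :=
  Wgt (MM y.1 y.2).card

lemma pexp_pairStep_le (h : 0 < N) (x : Equiv.Perm (Fin N) × Equiv.Perm (Fin N)) :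
    pexp (pairStep h x) Vfun ≤ rhoE N * Vfun x := by
  haveI : Nonempty (Fin N) := ⟨⟨0, h⟩⟩
  obtain ⟨d, e⟩ := x
  have hexp : pexp (pairStep h (d, e)) Vfun
      = (N : ℝ≥0∞)⁻¹ * ∑ p, ((N : ℝ≥0∞)⁻¹ *
          ∑ p', Vfun (d * Equiv.swap p p', e * Equiv.swap p (e⁻¹ (d p')))) := by
    simp only [pairStep, pexp_bind, pexp_pure, pexp_uniform, Fintype.card_fin]
  rw [hexp]
  by_cases hde : d = e
  · have hzero : ∀ p p' : Fin N,
        Vfun ((d * Equiv.swap p p', e * Equiv.swap p (e⁻¹ (d p')))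
          : Equiv.Perm (Fin N) × Equiv.Perm (Fin N)) = 0 := by
      intro p p'
      have hsub := MM'_subset_L1 d e p p' (by rw [hde])
      have hMM : MM d e = ∅ := by
        ext i
        simp [mem_MM, hde]
      rw [hMM, Finset.subset_empty] at hsub
      simp only [Vfun]; rw [hsub, Finset.card_empty, Wgt_zero]
    simp only [hzero, Finset.sum_const_zero, mul_zero]
    exact zero_le
  · set m := (MM d e).card with hm
    have hm2 : 2 ≤ m := two_le_card_MM hde
    have hmN : m ≤ N := by
      calc m ≤ Fintype.card (Fin N) := Finset.card_le_univ _
        _ = N := Fintype.card_fin N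
    have hterm : ∀ p p' : Fin N,
        Vfun ((d * Equiv.swap p p', e * Equiv.swap p (e⁻¹ (d p')))
          : Equiv.Perm (Fin N) × Equiv.Perm (Fin N))
          ≤ if p ∈ MM d e ∧ p' ∈ MM d e then Wgt (m - 1) else Wgt m := by
      intro p p'
      split_ifs with hgood
      · exact Wgt_mono (card_MM'_lt d e p p' hgood.1 hgood.2)
      · exact Wgt_mono (card_MM'_le d e p p')
    have hsum : ∑ p, ∑ p',
        Vfun ((d * Equiv.swap p p', e * Equiv.swap p (e⁻¹ (d p')))
          : Equiv.Perm (Fin N) × Equiv.Perm (Fin N))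
        ≤ ((N ^ 2 - 1 : ℕ) : ℝ≥0∞) * Wgt m := by
      calc ∑ p, ∑ p', Vfun ((d * Equiv.swap p p', e * Equiv.swap p (e⁻¹ (d p')))
              : Equiv.Perm (Fin N) × Equiv.Perm (Fin N))
          ≤ ∑ p : Fin N, ∑ p' : Fin N,
              (if p ∈ MM d e ∧ p' ∈ MM d e then Wgt (m - 1) else Wgt m) := by
            exact Finset.sum_le_sum fun p _ => Finset.sum_le_sum fun p' _ => hterm p p'
        _ = ∑ p : Fin N, (if p ∈ MM d e
              then ((m : ℝ≥0∞) * Wgt (m - 1) + ((N - m : ℕ) : ℝ≥0∞) * Wgt m)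
              else (N : ℝ≥0∞) * Wgt m) := by
            apply Finset.sum_congr rfl
            intro p _
            by_cases hp : p ∈ MM d e
            · simp only [hp, true_and, if_true]
              rw [sum_ite_mem_univ (MM d e) (Wgt (m - 1)) (Wgt m), Fintype.card_fin, ← hm]
            · simp only [hp, false_and, if_false]
              rw [Finset.sum_const, nsmul_eq_mul, Finset.card_univ, Fintype.card_fin]
        _ = (m : ℝ≥0∞) * ((m : ℝ≥0∞) * Wgt (m - 1) + ((N - m : ℕ) : ℝ≥0∞) * Wgt m)
              + ((N - m : ℕ) : ℝ≥0∞) * ((N : ℝ≥0∞) * Wgt m) := by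
            rw [sum_ite_mem_univ (MM d e) _ _, Fintype.card_fin, ← hm]
        _ = (m : ℝ≥0∞) ^ 2 * Wgt (m - 1) + ((N ^ 2 - m ^ 2 : ℕ) : ℝ≥0∞) * Wgt m :=
            double_count hmN _ _
        _ ≤ ((N ^ 2 - 1 : ℕ) : ℝ≥0∞) * Wgt m := Wgt_key hm2 hmN
    calc (N : ℝ≥0∞)⁻¹ * ∑ p, ((N : ℝ≥0∞)⁻¹ *
            ∑ p', Vfun (d * Equiv.swap p p', e * Equiv.swap p (e⁻¹ (d p'))))
        = (N : ℝ≥0∞)⁻¹ * ((N : ℝ≥0∞)⁻¹ * ∑ p, ∑ p',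
            Vfun ((d * Equiv.swap p p', e * Equiv.swap p (e⁻¹ (d p')))
              : Equiv.Perm (Fin N) × Equiv.Perm (Fin N))) := by
          rw [← Finset.mul_sum]
      _ ≤ (N : ℝ≥0∞)⁻¹ * ((N : ℝ≥0∞)⁻¹ * (((N ^ 2 - 1 : ℕ) : ℝ≥0∞) * Wgt m)) := by
          exact mul_le_mul_right (mul_le_mul_right hsum _) _
      _ = rhoE N * Wgt m := by
          have hinv : ((N ^ 2 : ℕ) : ℝ≥0∞)⁻¹ = (N : ℝ≥0∞)⁻¹ * (N : ℝ≥0∞)⁻¹ := by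
            rw [Nat.cast_pow, sq, ENNReal.mul_inv (by simp) (by simp)]
          rw [rhoE, ENNReal.div_eq_inv_mul, hinv]
          ring
      _ = rhoE N * Vfun (d, e) := rfl

end drift

/-! ### Supermartingale bound along the walk -/

lemma pexp_pairWalk_le {N : ℕ} (h : 0 < N) (x : Equiv.Perm (Fin N) × Equiv.Perm (Fin N)) (K : ℕ) :
    pexp (pairWalk h x K) Vfun ≤ rhoE N ^ K * Vfun x := by
  induction K with
  | zero => rw [pairWalk, pexp_pure]; simp
  | succ K ih =>
    rw [pairWalk, pexp_bind]
    calc pexp (pairWalk h x K) (fun y => pexp (pairStep h y) Vfun)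
        ≤ pexp (pairWalk h x K) (fun y => rhoE N * Vfun y) :=
          pexp_mono _ (fun y => pexp_pairStep_le h y)
      _ = rhoE N * pexp (pairWalk h x K) Vfun := pexp_mul _ _ _
      _ ≤ rhoE N * (rhoE N ^ K * Vfun x) := mul_le_mul_right ih _
      _ = rhoE N ^ (K + 1) * Vfun x := by rw [pow_succ]; ring

/-! ### TV distance and couplings -/

lemma tvDist_le_pexp_ne {α : Type*} [Fintype α] [DecidableEq α] (γ : PMF (α × α)) :
    tvDist (γ.map Prod.fst) (γ.map Prod.snd)
      ≤ pexp γ (fun z => if z.1 = z.2 then 0 else 1) := by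
  classical
  set μ := γ.map Prod.fst
  set ν := γ.map Prod.snd
  have hfst : ∀ x, μ x = ∑ y : α, γ (x, y) := by
    intro x
    show (γ.map Prod.fst) x = _
    rw [PMF.map_apply, tsum_fintype, Fintype.sum_prod_type]
    trans (∑ a : α, if x = a then ∑ b : α, γ (a, b) else 0)
    · exact Finset.sum_congr rfl fun a _ => by by_cases hxa : x = a <;> simp [hxa]
    · rw [Finset.sum_ite_eq]
      simp
  have hsnd : ∀ x, ν x = ∑ y : α, γ (y, x) := by
    intro x
    show (γ.map Prod.snd) x = _
    rw [PMF.map_apply, tsum_fintype, Fintype.sum_prod_type_right]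
    trans (∑ b : α, if x = b then ∑ a : α, γ (a, b) else 0)
    · exact Finset.sum_congr rfl fun b _ => by by_cases hxb : x = b <;> simp [hxb]
    · rw [Finset.sum_ite_eq]
      simp
  set offR : α → ℝ≥0∞ := fun x => ∑ y ∈ Finset.univ.erase x, γ (x, y) with hoffR
  set offC : α → ℝ≥0∞ := fun x => ∑ y ∈ Finset.univ.erase x, γ (y, x) with hoffC
  have hrow : ∀ x, μ x = γ (x, x) + offR x := by
    intro x
    rw [hfst x]
    exact (Finset.add_sum_erase _ _ (Finset.mem_univ x)).symm
  have hcol : ∀ x, ν x = γ (x, x) + offC x := by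
    intro x
    rw [hsnd x]
    exact (Finset.add_sum_erase _ _ (Finset.mem_univ x)).symm
  have hsub1 : ∀ x, μ x - ν x ≤ offR x := by
    intro x
    rw [tsub_le_iff_right, hrow x, hcol x]
    calc γ (x, x) + offR x ≤ (γ (x, x) + offC x) + offR x := by
          exact add_le_add_left le_self_add _
      _ = offR x + (γ (x, x) + offC x) := by ring
  have hsub2 : ∀ x, ν x - μ x ≤ offC x := by
    intro x
    rw [tsub_le_iff_right, hrow x, hcol x]
    calc γ (x, x) + offC x ≤ (γ (x, x) + offR x) + offC x := by
          exact add_le_add_left le_self_add _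
      _ = offC x + (γ (x, x) + offR x) := by ring
  have hOD_R : pexp γ (fun z => if z.1 = z.2 then 0 else 1) = ∑ x : α, offR x := by
    rw [pexp, tsum_fintype, Fintype.sum_prod_type]
    apply Finset.sum_congr rfl
    intro a _
    rw [← Finset.add_sum_erase _ (fun b => γ (a, b) * (if a = b then 0 else 1))
      (Finset.mem_univ a)]
    simp only [if_true, eq_self_iff_true, mul_zero, zero_add, ite_true]
    apply Finset.sum_congr rfl
    intro b hb
    rw [if_neg (Ne.symm (Finset.ne_of_mem_erase hb)), mul_one]
  have hOD_C : pexp γ (fun z => if z.1 = z.2 then 0 else 1) = ∑ x : α, offC x := by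
    rw [pexp, tsum_fintype, Fintype.sum_prod_type_right]
    apply Finset.sum_congr rfl
    intro b _
    rw [← Finset.add_sum_erase _ (fun a => γ (a, b) * (if a = b then 0 else 1))
      (Finset.mem_univ b)]
    simp only [if_true, eq_self_iff_true, mul_zero, zero_add, ite_true]
    apply Finset.sum_congr rfl
    intro a ha
    rw [if_neg (Finset.ne_of_mem_erase ha), mul_one]
  calc tvDist μ ν = (1 / 2) * ∑' x, max (μ x - ν x) (ν x - μ x) := rfl
    _ ≤ (1 / 2) * ∑' x, ((μ x - ν x) + (ν x - μ x)) := by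
        exact mul_le_mul_right (ENNReal.tsum_le_tsum fun x => max_le le_self_add le_add_self) _
    _ = (1 / 2) * ((∑' x, (μ x - ν x)) + ∑' x, (ν x - μ x)) := by rw [ENNReal.tsum_add]
    _ ≤ (1 / 2) * ((∑ x : α, offR x) + ∑ x : α, offC x) := by
        apply mul_le_mul_right
        apply add_le_add
        · rw [tsum_fintype]; exact Finset.sum_le_sum fun x _ => hsub1 x
        · rw [tsum_fintype]; exact Finset.sum_le_sum fun x _ => hsub2 x
    _ = pexp γ (fun z => if z.1 = z.2 then 0 else 1) := by
        rw [← hOD_R, ← hOD_C, ← two_mul, ← mul_assoc, one_div,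
          ENNReal.inv_mul_cancel two_ne_zero ENNReal.ofNat_ne_top, one_mul]

/-! ### Numerical estimate -/

lemma rho_pow_le {N : ℕ} (hN : 2 ≤ N) :
    rhoE N ^ (⌈(2 * (N : ℝ) ^ 2) * Real.log N⌉₊) ≤ ENNReal.ofReal (1 / N) := by
  have hNR : (0 : ℝ) < N := by positivity
  have hN2 : (0 : ℝ) < (N : ℝ) ^ 2 := by positivity
  set K := ⌈(2 * (N : ℝ) ^ 2) * Real.log N⌉₊ with hK
  set r : ℝ := ((N ^ 2 - 1 : ℕ) : ℝ) / ((N ^ 2 : ℕ) : ℝ) with hr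
  have hrho : rhoE N = ENNReal.ofReal r := by
    rw [rhoE, hr, ENNReal.ofReal_div_of_pos (by push_cast; positivity)]
    rw [ENNReal.ofReal_natCast, ENNReal.ofReal_natCast]
  have hr0 : 0 ≤ r := by positivity
  have hrval : r = 1 - 1 / (N : ℝ) ^ 2 := by
    rw [hr, Nat.cast_sub (Nat.one_le_pow _ _ (by omega))]
    push_cast
    field_simp
  have hrexp : r ≤ Real.exp (-(1 / (N : ℝ) ^ 2)) := by
    rw [hrval]
    have := Real.add_one_le_exp (-(1 / (N : ℝ) ^ 2))
    linarith
  have hpow : rhoE N ^ K ≤ ENNReal.ofReal (Real.exp (-(1 / (N : ℝ) ^ 2)) ^ K) := by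
    rw [hrho, ← ENNReal.ofReal_pow hr0]
    exact ENNReal.ofReal_le_ofReal (pow_le_pow_left₀ hr0 hrexp K)
  have hexp_pow : Real.exp (-(1 / (N : ℝ) ^ 2)) ^ K = Real.exp ((K : ℝ) * (-(1 / (N : ℝ) ^ 2))) := by
    rw [Real.exp_nat_mul]
  have hKlarge : 2 * (N : ℝ) ^ 2 * Real.log N ≤ (K : ℝ) := Nat.le_ceil _
  have hlogpos : 0 ≤ Real.log N := Real.log_nonneg (by exact_mod_cast (by omega : 1 ≤ N))
  have hexp_le : Real.exp ((K : ℝ) * (-(1 / (N : ℝ) ^ 2))) ≤ Real.exp (-(2 * Real.log N)) := by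
    apply Real.exp_le_exp.mpr
    rw [mul_neg, neg_le_neg_iff]
    rw [mul_one_div, le_div_iff₀ hN2]
    calc 2 * Real.log N * (N : ℝ) ^ 2 = 2 * (N : ℝ) ^ 2 * Real.log N := by ring
      _ ≤ (K : ℝ) := hKlarge
  have hfinal : Real.exp (-(2 * Real.log N)) ≤ 1 / (N : ℝ) := by
    rw [Real.exp_neg]
    rw [show (2 : ℝ) * Real.log N = Real.log ((N : ℝ) ^ 2) by
      rw [Real.log_pow]; push_cast; ring]
    rw [Real.exp_log hN2]
    rw [one_div, inv_le_inv₀ hN2 hNR]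
    nlinarith [hNR, show (1:ℝ) ≤ (N:ℝ) by exact_mod_cast (by omega : 1 ≤ N)]
  calc rhoE N ^ K ≤ ENNReal.ofReal (Real.exp (-(1 / (N : ℝ) ^ 2)) ^ K) := hpow
    _ = ENNReal.ofReal (Real.exp ((K : ℝ) * (-(1 / (N : ℝ) ^ 2)))) := by rw [hexp_pow]
    _ ≤ ENNReal.ofReal (Real.exp (-(2 * Real.log N))) := ENNReal.ofReal_le_ofReal hexp_le
    _ ≤ ENNReal.ofReal (1 / N) := ENNReal.ofReal_le_ofReal hfinal

/-! ### Main theorem -/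

theorem rtransWalk_mixes_to_uniform :
    ∃ C : ℝ, 0 < C ∧
      ∀ N : ℕ, (hN : 2 ≤ N) → ∀ d : Equiv.Perm (Fin N),
        tvDist (rtransWalk (by omega : 0 < N) d ⌈(2 * (N : ℝ) ^ 2) * Real.log N⌉₊)
            (uniformPerm N)
          ≤ ENNReal.ofReal (C / N) := by
  refine ⟨2, by norm_num, ?_⟩
  intro N hN d
  have h : 0 < N := by omega
  haveI : Nonempty (Fin N) := ⟨⟨0, h⟩⟩
  haveI : Nonempty (Equiv.Perm (Fin N)) := ⟨1⟩
  set K := ⌈(2 * (N : ℝ) ^ 2) * Real.log N⌉₊ with hK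
  set γ := (uniformPerm N).bind (fun e => pairWalk h (d, e) K) with hγ
  have hfst : γ.map Prod.fst = rtransWalk h d K := by
    rw [hγ, PMF.map_bind]
    rw [show (fun e => (pairWalk h (d, e) K).map Prod.fst)
        = fun _ : Equiv.Perm (Fin N) => rtransWalk h d K from
      funext fun e => pairWalk_fst h (d, e) K]
    exact PMF.bind_const _ _
  have hsnd : γ.map Prod.snd = uniformPerm N := by
    rw [hγ, PMF.map_bind]
    rw [show (fun e => (pairWalk h (d, e) K).map Prod.snd)
        = fun e : Equiv.Perm (Fin N) => rtransWalk h e K from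
      funext fun e => pairWalk_snd h (d, e) K]
    exact unif_walk_stat h K
  have hwalk_eq : rtransWalk (by omega : 0 < N) d K = rtransWalk h d K := rfl
  rw [hwalk_eq, ← hfst, ← hsnd]
  have hbound : pexp γ (fun z => if z.1 = z.2 then 0 else 1) ≤ rhoE N ^ K * 2 := by
    rw [hγ, pexp_bind]
    have hper : ∀ e : Equiv.Perm (Fin N),
        pexp (pairWalk h (d, e) K) (fun z => if z.1 = z.2 then 0 else 1)
          ≤ rhoE N ^ K * 2 := by
      intro e
      calc pexp (pairWalk h (d, e) K) (fun z => if z.1 = z.2 then 0 else 1)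
          ≤ pexp (pairWalk h (d, e) K) Vfun := by
            apply pexp_mono
            intro z
            by_cases hz : z.1 = z.2
            · simp [hz]
            · rw [if_neg hz]
              exact one_le_Wgt (by have := two_le_card_MM hz; omega)
        _ ≤ rhoE N ^ K * Vfun (d, e) := pexp_pairWalk_le h (d, e) K
        _ ≤ rhoE N ^ K * 2 := mul_le_mul_right (Wgt_le_two _) _
    calc pexp (uniformPerm N)
          (fun e => pexp (pairWalk h (d, e) K) (fun z => if z.1 = z.2 then 0 else 1))
        ≤ pexp (uniformPerm N) (fun _ => rhoE N ^ K * 2) := pexp_mono _ hper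
      _ = rhoE N ^ K * 2 := pexp_const _ _
  calc tvDist (γ.map Prod.fst) (γ.map Prod.snd)
      ≤ pexp γ (fun z => if z.1 = z.2 then 0 else 1) := tvDist_le_pexp_ne γ
    _ ≤ rhoE N ^ K * 2 := hbound
    _ ≤ ENNReal.ofReal (1 / N) * 2 := mul_le_mul_left (rho_pow_le hN) _
    _ = ENNReal.ofReal ((2 : ℝ) / N) := by
        rw [show (2 : ℝ≥0∞) = ENNReal.ofReal (2 : ℝ) by simp]
        rw [← ENNReal.ofReal_mul (by positivity)]
        congr 1
        ring
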